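/- Let n ≥ 1, let u ∈ ℝⁿ be a unit vector, let r > 0, and let 0 ≤ t ≤ r. Then the Lebesgue measure of the spherical cap {x ∈ ℝⁿ : |x| ≤ r, ⟨u, x⟩ ≥ r − t} is at most (ω_{n−1} · π^{n+1} · rⁿ/(n+1)) · (t/(2r))^{(n+1)/2}, where ω_{n−1} is the Lebesgue measure of the closed unit ball in ℝⁿ⁻¹. -/

import Mathlib

open MeasureTheory Metric
open scoped RealInnerProductSpace

private lemma aux_nat (k : ℕ) : (k + 2) * 2 ^ k ≤ 3 ^ (k + 1) := by
  induction k with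
  | zero => norm_num
  | succ k ih =>
    calc (k + 1 + 2) * 2 ^ (k + 1) = 2 * (k + 3) * 2 ^ k := by ring
    _ ≤ 3 * (k + 2) * 2 ^ k := Nat.mul_le_mul_right _ (by omega)
    _ = 3 * ((k + 2) * 2 ^ k) := by ring
    _ ≤ 3 * 3 ^ (k + 1) := Nat.mul_le_mul_left _ ih
    _ = 3 ^ (k + 1 + 1) := by ring

private lemma aux_pi (m : ℕ) : ((m : ℝ) + 2) * 2 ^ (m + 1) ≤ Real.pi ^ (m + 2) := by
  have h2 : (0:ℝ) < 2 ^ (m + 1) := by positivity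
  have hnat := aux_nat (m + 1)
  have h1 : ((m : ℝ) + 2) * 2 ^ (m + 1) ≤ 3 ^ (m + 2) := by
    calc ((m : ℝ) + 2) * 2 ^ (m + 1) ≤ ((m : ℝ) + 3) * 2 ^ (m + 1) := by nlinarith
    _ = (((m + 3) * 2 ^ (m + 1) : ℕ) : ℝ) := by push_cast; ring
    _ ≤ (((3 : ℕ) ^ (m + 2) : ℕ) : ℝ) := by
        exact_mod_cast hnat
    _ = 3 ^ (m + 2) := by push_cast; ring
  exact h1.trans (pow_le_pow_left₀ (by norm_num) Real.pi_gt_three.le _)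

private lemma aux_key (m : ℕ) (r t ω : ℝ) (hr : 0 < r) (h0 : 0 ≤ t) (htr : t ≤ r)
    (hω : 0 ≤ ω) :
    t * Real.sqrt (2 * r * t) ^ m * ω ≤
      ω * Real.pi ^ (m + 1 + 1) * r ^ (m + 1) / (↑(m + 1) + 1) *
        (t / (2 * r)) ^ (((↑(m + 1) : ℝ) + 1) / 2) := by
  have h2r : (0:ℝ) < 2 * r := by linarith
  have hx : (0:ℝ) ≤ t / (2 * r) := div_nonneg h0 h2r.le
  set e : ℝ := ((↑(m + 1) : ℝ) + 1) / 2 with he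
  set s : ℝ := Real.sqrt (2 * r * t) with hs
  have hs2 : s ^ 2 = 2 * r * t := Real.sq_sqrt (by positivity)
  set c : ℝ := (↑(m + 1) : ℝ) + 1 with hc
  have hcpos : (0:ℝ) < c := by rw [hc]; push_cast; linarith [Nat.cast_nonneg (α := ℝ) m]
  set B : ℝ := Real.pi ^ (m + 1 + 1) * r ^ (m + 1) / c * (t / (2 * r)) ^ e with hB
  have hBnn : 0 ≤ B := by
    apply mul_nonneg (div_nonneg (by positivity) hcpos.le) (Real.rpow_nonneg hx _)
  have hAnn : 0 ≤ t * s ^ m := by positivity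
  have main : t * s ^ m ≤ B := by
    have hsq : (t * s ^ m) ^ 2 ≤ B ^ 2 := by
      have hpow2 : ((t / (2 * r)) ^ e) ^ 2 = (t / (2 * r)) ^ (m + 2) := by
        rw [← Real.rpow_natCast ((t / (2 * r)) ^ e) 2, ← Real.rpow_mul hx,
          ← Real.rpow_natCast (t / (2 * r)) (m + 2)]
        congr 1
        rw [he, hc]; push_cast; ring
      have hA2 : (t * s ^ m) ^ 2 = (2 * r) ^ m * t ^ (m + 2) := by
        have h1 : (s ^ m) ^ 2 = (2 * r) ^ m * t ^ m := by
          rw [← pow_mul, pow_mul', hs2, mul_pow]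
        rw [mul_pow, h1]; ring
      have hB2 : B ^ 2 = (Real.pi ^ (m + 1 + 1) * r ^ (m + 1) / c) ^ 2 *
          (t ^ (m + 2) / (2 * r) ^ (m + 2)) := by
        rw [hB, mul_pow, hpow2, div_pow, div_pow]
      rw [hA2, hB2]
      have hK : (2 * r) ^ m ≤ (Real.pi ^ (m + 1 + 1) * r ^ (m + 1) / c) ^ 2 / (2 * r) ^ (m + 2) := by
        rw [le_div_iff₀ (by positivity)]
        have step1 : (2 * r) ^ m * (2 * r) ^ (m + 2) = ((2 * r) ^ (m + 1)) ^ 2 := by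
          rw [← pow_add, ← pow_mul]; congr 1; ring
        rw [step1]
        have step2 : (2 * r) ^ (m + 1) ≤ Real.pi ^ (m + 1 + 1) * r ^ (m + 1) / c := by
          rw [le_div_iff₀ hcpos, mul_pow]
          have hpi := aux_pi m
          have hc' : c = (m : ℝ) + 2 := by rw [hc]; push_cast; ring
          rw [hc']
          nlinarith [mul_nonneg (sub_nonneg.2 hpi) (pow_nonneg hr.le (m + 1)),
            pow_nonneg hr.le (m + 1)]
        exact pow_le_pow_left₀ (by positivity) step2 2
      calc (2 * r) ^ m * t ^ (m + 2)
          ≤ ((Real.pi ^ (m + 1 + 1) * r ^ (m + 1) / c) ^ 2 / (2 * r) ^ (m + 2)) * t ^ (m + 2) :=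
            mul_le_mul_of_nonneg_right hK (by positivity)
        _ = (Real.pi ^ (m + 1 + 1) * r ^ (m + 1) / c) ^ 2 * (t ^ (m + 2) / (2 * r) ^ (m + 2)) := by
            ring
    have h := Real.sqrt_le_sqrt hsq
    rwa [Real.sqrt_sq hAnn, Real.sqrt_sq hBnn] at h
  calc t * s ^ m * ω = ω * (t * s ^ m) := by ring
    _ ≤ ω * B := mul_le_mul_of_nonneg_left main hω
    _ = ω * Real.pi ^ (m + 1 + 1) * r ^ (m + 1) / c * (t / (2 * r)) ^ e := by
        rw [hB]; ring

theorem stmt17 {n : ℕ} (hn : 1 ≤ n) (u : EuclideanSpace ℝ (Fin n)) (hu : ‖u‖ = 1)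
    (r t : ℝ) (hr : 0 < r) (h0 : 0 ≤ t) (htr : t ≤ r) :
    (volume {x : EuclideanSpace ℝ (Fin n) | ‖x‖ ≤ r ∧ r - t ≤ ⟪u, x⟫}).toReal ≤
      (volume (closedBall (0 : EuclideanSpace ℝ (Fin (n - 1))) 1)).toReal *
        Real.pi ^ (n + 1) * r ^ n / (n + 1) * (t / (2 * r)) ^ (((n : ℝ) + 1) / 2) := by
  obtain ⟨m, rfl⟩ : ∃ m, n = m + 1 := ⟨n - 1, (Nat.succ_pred_eq_of_pos hn).symm⟩
  show _ ≤ (volume (closedBall (0 : EuclideanSpace ℝ (Fin m)) 1)).toReal * _ * _ / _ * _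
  -- orthonormal basis whose first vector is u
  have hON : Orthonormal ℝ (({0} : Set (Fin (m + 1))).restrict (fun _ => u)) := by
    constructor
    · intro i; exact hu
    · rintro ⟨i, hi⟩ ⟨j, hj⟩ hij
      simp only [Set.mem_singleton_iff] at hi hj
      exact absurd (by subst hi; subst hj; rfl) hij
  obtain ⟨b, hb⟩ := hON.exists_orthonormalBasis_extension_of_card_eq (by simp)
  have hb0 : b 0 = u := hb 0 rfl
  set R : ℝ := Real.sqrt (2 * r * t) with hR
  set ω := volume (closedBall (0 : EuclideanSpace ℝ (Fin m)) 1) with hω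
  set Ψ : EuclideanSpace ℝ (Fin (m + 1)) → ℝ × EuclideanSpace ℝ (Fin m) :=
    (Prod.map (id : ℝ → ℝ) ⇑((MeasurableEquiv.toLp 2 (Fin m → ℝ)).symm).symm) ∘
      ⇑(MeasurableEquiv.piFinSuccAbove (fun _ : Fin (m + 1) => ℝ) 0) ∘
      ⇑((MeasurableEquiv.toLp 2 (Fin (m + 1) → ℝ)).symm) ∘ ⇑b.repr with hΨdef
  have hΨ : MeasurePreserving Ψ volume volume := by
    have h1 := b.measurePreserving_repr
    have h2 := EuclideanSpace.volume_preserving_symm_measurableEquiv_toLp (Fin (m + 1))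
    have h3 := MeasureTheory.volume_preserving_piFinSuccAbove (fun _ : Fin (m + 1) => ℝ) 0
    have h4 : MeasurePreserving (Prod.map (id : ℝ → ℝ)
        ⇑((MeasurableEquiv.toLp 2 (Fin m → ℝ)).symm).symm) volume volume := by
      rw [Measure.volume_eq_prod]
      exact (MeasurePreserving.id (volume : Measure ℝ)).prod
        (EuclideanSpace.volume_preserving_symm_measurableEquiv_toLp (Fin m)).symm
    exact h4.comp (h3.comp (h2.comp h1))
  set A : Set (ℝ × EuclideanSpace ℝ (Fin m)) :=
    Set.Icc (r - t) r ×ˢ closedBall (0 : EuclideanSpace ℝ (Fin m)) R with hA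
  have hAm : MeasurableSet A := measurableSet_Icc.prod measurableSet_closedBall
  have hsub : {x : EuclideanSpace ℝ (Fin (m + 1)) | ‖x‖ ≤ r ∧ r - t ≤ ⟪u, x⟫} ⊆ Ψ ⁻¹' A := by
    rintro x ⟨hx1, hx2⟩
    set y := b.repr x with hy
    have hinner : ⟪u, x⟫ = y 0 := by
      rw [← hb0, ← OrthonormalBasis.repr_apply_apply]
    have hsum : ∑ i, y i ^ 2 ≤ r ^ 2 := by
      have h1 : ‖y‖ ≤ r := by rw [hy, b.repr.norm_map x]; exact hx1
      have h2 : ‖y‖ ^ 2 = ∑ i, y i ^ 2 := by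
        rw [EuclideanSpace.norm_eq, Real.sq_sqrt (by positivity)]
        simp [Real.norm_eq_abs, sq_abs]
      nlinarith [norm_nonneg y]
    have hy0 : r - t ≤ y 0 := by rw [← hinner]; exact hx2
    have hsplit : ∑ i, y i ^ 2 = y 0 ^ 2 + ∑ j : Fin m, y (Fin.succ j) ^ 2 :=
      Fin.sum_univ_succ _
    have hT : 0 ≤ ∑ j : Fin m, y (Fin.succ j) ^ 2 := by positivity
    have hy0r : y 0 ≤ r := by nlinarith
    have htail : ∑ j : Fin m, y (Fin.succ j) ^ 2 ≤ 2 * r * t := by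
      have hsq0 : (r - t) ^ 2 ≤ y 0 ^ 2 := pow_le_pow_left₀ (by linarith) hy0 2
      nlinarith
    have hΨx : Ψ x = (y 0,
        ((MeasurableEquiv.toLp 2 (Fin m → ℝ)).symm).symm (Fin.removeNth 0 (fun i => y i))) := by
      simp only [hΨdef, Function.comp_apply, MeasurableEquiv.piFinSuccAbove_apply,
        Prod.map_apply, id_eq]
      exact Prod.ext rfl rfl
    simp only [Set.mem_preimage, hΨx, hA, Set.mem_prod, Set.mem_Icc,
      mem_closedBall_zero_iff]
    refine ⟨⟨hy0, hy0r⟩, ?_⟩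
    rw [EuclideanSpace.norm_eq]
    have happ : ∀ j : Fin m,
        (((MeasurableEquiv.toLp 2 (Fin m → ℝ)).symm).symm (Fin.removeNth 0 (fun i => y i))) j
          = y (Fin.succ j) := by
      intro j
      simp [Fin.removeNth, Fin.zero_succAbove, Fin.tail]
    rw [hR]
    apply Real.sqrt_le_sqrt
    calc ∑ j : Fin m, ‖(((MeasurableEquiv.toLp 2 (Fin m → ℝ)).symm).symm
          (Fin.removeNth 0 (fun i => y i))) j‖ ^ 2
        = ∑ j : Fin m, y (Fin.succ j) ^ 2 := by
          refine Finset.sum_congr rfl fun j _ => ?_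
          rw [happ j, Real.norm_eq_abs, sq_abs]
      _ ≤ 2 * r * t := htail
  have hv : volume {x : EuclideanSpace ℝ (Fin (m + 1)) | ‖x‖ ≤ r ∧ r - t ≤ ⟪u, x⟫} ≤
      ENNReal.ofReal t * (ENNReal.ofReal (R ^ m) * ω) := by
    calc volume {x : EuclideanSpace ℝ (Fin (m + 1)) | ‖x‖ ≤ r ∧ r - t ≤ ⟪u, x⟫}
        ≤ volume (Ψ ⁻¹' A) := measure_mono hsub
      _ = volume A := hΨ.measure_preimage hAm.nullMeasurableSet
      _ = volume (Set.Icc (r - t) r) * volume (closedBall (0 : EuclideanSpace ℝ (Fin m)) R) := by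
          rw [hA, Measure.volume_eq_prod, Measure.prod_prod]
      _ = ENNReal.ofReal t * (ENNReal.ofReal (R ^ m) * ω) := by
          rw [Real.volume_Icc, Measure.addHaar_closedBall' _ _ (Real.sqrt_nonneg _),
            sub_sub_cancel, finrank_euclideanSpace_fin]
  have hfin : ENNReal.ofReal t * (ENNReal.ofReal (R ^ m) * ω) ≠ ⊤ :=
    ENNReal.mul_ne_top ENNReal.ofReal_ne_top
      (ENNReal.mul_ne_top ENNReal.ofReal_ne_top measure_closedBall_lt_top.ne)
  have h5 := ENNReal.toReal_mono hfin hv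
  rw [ENNReal.toReal_mul, ENNReal.toReal_mul, ENNReal.toReal_ofReal h0,
    ENNReal.toReal_ofReal (by positivity)] at h5
  refine h5.trans ?_
  have hkey := aux_key m r t ω.toReal hr h0 htr ENNReal.toReal_nonneg
  calc t * (R ^ m * ω.toReal) = t * R ^ m * ω.toReal := by ring
    _ ≤ _ := hkey
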